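/- Let (X,d) be an invariant generalised quasi-metric meet-semilattice. Then the relation ≅_d, defined by x ≅_d y iff d(x,y) < ∞ and d(y,x) < ∞, is a congruence on X: if x ≅_d y and z ≅_d w then x ⊓ z ≅_d y ⊓ w. -/

import Mathlib

open scoped ENNReal

/-- On an invariant generalised quasi-metric meet-semilattice, the relation
`x ≅_d y ↔ d(x,y) < ∞ ∧ d(y,x) < ∞` is a congruence. -/
theorem stmt_11 {X : Type*} [SemilatticeInf X] [Nonempty X] (d : X → X → ℝ≥0∞)
    (hQM1 : ∀ x y, (d x y = 0 ∧ d y x = 0) ↔ x = y)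
    (hQM2 : ∀ x y z, d x z ≤ d x y + d y z)
    (hcompat : ∀ x y, d x y = 0 ↔ x ≤ y)
    (hinv : ∀ x y, d x y = d x (x ⊓ y)) :
    ∀ x y z w : X, (d x y < ⊤ ∧ d y x < ⊤) → (d z w < ⊤ ∧ d w z < ⊤) →
      (d (x ⊓ z) (y ⊓ w) < ⊤ ∧ d (y ⊓ w) (x ⊓ z) < ⊤) := by
  have h0 : ∀ a b : X, a ≤ b → d a b = 0 := fun a b h => (hcompat a b).2 h
  have key : ∀ a b c : X, d a (b ⊓ c) ≤ d a b + d a c := by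
    intro a b c
    calc d a (b ⊓ c) = d a (a ⊓ (b ⊓ c)) := hinv _ _
      _ = d a ((a ⊓ b) ⊓ c) := by rw [inf_assoc]
      _ ≤ d a (a ⊓ b) + d (a ⊓ b) ((a ⊓ b) ⊓ c) := hQM2 _ _ _
      _ = d a b + d (a ⊓ b) c := by rw [← hinv, ← hinv]
      _ ≤ d a b + (d (a ⊓ b) a + d a c) := add_le_add le_rfl (hQM2 _ _ _)
      _ = d a b + d a c := by rw [h0 _ _ inf_le_left, zero_add]
  have left : ∀ a b c : X, d (a ⊓ b) c ≤ d a c := by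
    intro a b c
    calc d (a ⊓ b) c ≤ d (a ⊓ b) a + d a c := hQM2 _ _ _
      _ = d a c := by rw [h0 _ _ inf_le_left, zero_add]
  have right : ∀ a b c : X, d (a ⊓ b) c ≤ d b c := by
    intro a b c
    calc d (a ⊓ b) c ≤ d (a ⊓ b) b + d b c := hQM2 _ _ _
      _ = d b c := by rw [h0 _ _ inf_le_right, zero_add]
  have main : ∀ x y z w : X, d x y < ⊤ → d z w < ⊤ → d (x ⊓ z) (y ⊓ w) < ⊤ := by
    intro x y z w h1 h2
    calc d (x ⊓ z) (y ⊓ w) ≤ d (x ⊓ z) y + d (x ⊓ z) w := key _ _ _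
      _ ≤ d x y + d z w := add_le_add (left _ _ _) (right _ _ _)
      _ < ⊤ := ENNReal.add_lt_top.2 ⟨h1, h2⟩
  intro x y z w ⟨h1, h2⟩ ⟨h3, h4⟩
  exact ⟨main x y z w h1 h3, main y x w z h2 h4⟩
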